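/- Let A be an S-structure with ∅ ≤ₛ A, and let A* be its generic R-representation (adding, for each clique C of A and each 1 ≤ i ≤ 𝔪(C), a fresh pair of designated witnesses related exactly to the elements of C). Then ∅ ≤ A* as an R-structure (every subset of A* has nonnegative R-predimension d₀), and A ≤ₛ A*. -/

import Mathlib

variable {α : Type*} [DecidableEq α] {β : Type*} [DecidableEq β]

/-- `|X|* = max(0, |X| - 2)`. -/
def cardStar (X : Finset α) : ℤ := max 0 ((X.card : ℤ) - 2)

/-- An S-structure: a carrier set together with a pre-multiplicity function `pm` on
finite sets (its support being the set of declared maximal cliques, each a subset of the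
carrier of size `≥ 3`, with pre-multiplicity at most 3), such that every finite set meets
only finitely many cliques in `≥ 3` points, and the associated multiplicity function
`m(D) = Σ_{D ⊆ C} pm C` satisfies the validity bound `m(D)·(|D|-2) ≤ |D|`. -/
structure SStruct (α : Type*) [DecidableEq α] where
  carrier : Set α
  pm : Finset α → ℕ
  pm_le : ∀ C, pm C ≤ 3
  pm_supp : ∀ C, pm C ≠ 0 → ↑C ⊆ carrier ∧ 3 ≤ C.card
  finite_meets : ∀ X : Finset α, {C : Finset α | pm C ≠ 0 ∧ 3 ≤ (C ∩ X).card}.Finite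
  valid : ∀ D : Finset α, 3 ≤ D.card →
    (∑ᶠ C ∈ {C : Finset α | D ⊆ C}, pm C) * (D.card - 2) ≤ D.card

/-- The S-predimension of a finite subset `X` of the ambient S-structure `N`:
`d₀ₛ(X) = |X| - Σ_C pm(C)·|C ∩ X|*` (the induced cliques on `X` are the `C ∩ X`). -/
noncomputable def d0s (N : SStruct α) (X : Finset α) : ℤ :=
  (X.card : ℤ) - ∑ᶠ C : Finset α, (N.pm C : ℤ) * cardStar (C ∩ X)

/-- A finite subset `A` is strong (self-sufficient) in `B`: `d₀ₛ(X/A) ≥ 0` for every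
finite `X ⊆ B`. -/
def FinStrongIn (N : SStruct α) (A : Finset α) (B : Set α) : Prop :=
  ↑A ⊆ B ∧ ∀ X : Finset α, ↑X ⊆ B → d0s N A ≤ d0s N (X ∪ A)

/-- `A ≤ₛ B` for arbitrary (possibly infinite) subsets `A ⊆ B` of the ambient
S-structure `N`: every finite `D ⊆ A` strong in `A` is strong in `B`. -/
def StrongIn (N : SStruct α) (A B : Set α) : Prop :=
  A ⊆ B ∧ ∀ D : Finset α, ↑D ⊆ A → FinStrongIn N D A → FinStrongIn N D B

/-- The associated multiplicity function: `m(X) = Σ_{X ⊆ C} pm C`. -/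
noncomputable def multFun (N : SStruct α) (X : Finset α) : ℕ :=
  ∑ᶠ C ∈ {C : Finset α | X ⊆ C}, N.pm C

/-- `r(X)`: the number of three-element subsets `{x,y,z}` of `X` with `T x y z`. -/
noncomputable def rCount (T : β → β → β → Prop) (X : Finset β) : ℕ :=
  {s : Finset β | s ⊆ X ∧ ∃ x y z : β, x ≠ y ∧ x ≠ z ∧ y ≠ z ∧ s = {x, y, z} ∧ T x y z}.ncard

/-- The R-predimension `d₀(X) = |X| - r(X)`. -/
noncomputable def d0 (T : β → β → β → Prop) (X : Finset β) : ℤ :=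
  (X.card : ℤ) - (rCount T X : ℤ)

/-- The maximal witnessed S-cliques (universe, witness pair) of `X` in the
`T`-structure on `β`. -/
def MCPin (T : β → β → β → Prop) (X : Finset β) : Set (Finset β × Finset β) :=
  {p | 3 ≤ p.1.card ∧ p.1 ⊆ X ∧ ∃ x y : β, x ≠ y ∧ p.2 = {x, y} ∧
    x ∉ p.1 ∧ y ∉ p.1 ∧ (∀ c ∈ p.1, T c x y) ∧
    ∀ a ∈ X, a ∉ p.1 → a ≠ x → a ≠ y → ¬ T a x y}

/-- The pre-multiplicity of a universe `D` among the maximal cliques of `X`. -/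
noncomputable def pmRof (T : β → β → β → Prop) (X D : Finset β) : ℕ :=
  {w : Finset β | (D, w) ∈ MCPin T X}.ncard

/-- The S-predimension of `X` computed in the S-reduct of the `T`-structure:
`d₀ₛ(X) = |X| - Σ_D 𝔪(D)·(|D| - 2)`. -/
noncomputable def d0sOf (T : β → β → β → Prop) (X : Finset β) : ℤ :=
  (X.card : ℤ) -
    ∑ᶠ D ∈ {D : Finset β | ∃ w : Finset β, (D, w) ∈ MCPin T X},
      (pmRof T X D : ℤ) * ((D.card : ℤ) - 2)

/-- The relation of the generic R-representation `A*` of the S-structure `A`: for each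
clique `C` (with `pm C ≠ 0`) and each `i < pm C` a fresh pair of designated witnesses
`x^{C,i} = inr (C,i,true)`, `y^{C,i} = inr (C,i,false)` is related exactly to the
elements of `C`. -/
def Rstar (A : SStruct α) :
    (α ⊕ (Finset α × ℕ × Bool)) → (α ⊕ (Finset α × ℕ × Bool)) →
      (α ⊕ (Finset α × ℕ × Bool)) → Prop := fun u v w =>
  ∃ (C : Finset α) (i : ℕ), i < A.pm C ∧ ∃ c ∈ C,
    ({u, v, w} : Finset (α ⊕ (Finset α × ℕ × Bool))) =
      {Sum.inl c, Sum.inr (C, i, true), Sum.inr (C, i, false)}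

/-- The universe of the generic R-representation `A*`. -/
def starCarrier (A : SStruct α) : Set (α ⊕ (Finset α × ℕ × Bool)) :=
  (Sum.inl '' A.carrier) ∪
    {w | ∃ (C : Finset α) (i : ℕ) (b : Bool), w = Sum.inr (C, i, b) ∧ i < A.pm C}


section Aux

variable {A : SStruct α}

private lemma rstar_swap {u v w : α ⊕ (Finset α × ℕ × Bool)} (h : Rstar A u v w) :
    Rstar A u w v := by
  obtain ⟨C, i, hi, c, hc, hset⟩ := h
  exact ⟨C, i, hi, c, hc, by rw [Finset.pair_comm w v]; exact hset⟩

private lemma rstar_det {d y : α ⊕ (Finset α × ℕ × Bool)} {c : α}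
    (h : Rstar A d (Sum.inl c) y) (hy : y ≠ Sum.inl c) :
    ∃ C i b, i < A.pm C ∧ y = Sum.inr (C, i, b) ∧ d = Sum.inr (C, i, !b) := by
  obtain ⟨C, i, hi, c', hc', hset⟩ := h
  have hmem : ∀ z, z ∈ ({d, Sum.inl c, y} : Finset (α ⊕ (Finset α × ℕ × Bool))) →
      z = Sum.inl c' ∨ z = Sum.inr (C, i, true) ∨ z = Sum.inr (C, i, false) := by
    intro z hz; rw [hset] at hz; simpa using hz
  have hcc : c' = c := by
    rcases hmem (Sum.inl c) (by simp) with h1 | h1 | h1 <;> simp_all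
  rcases hmem y (by simp) with h1 | h1 | h1
  · rw [hcc] at h1; exact absurd h1 hy
  · refine ⟨C, i, true, hi, h1, ?_⟩
    have h2 : (Sum.inr (C, i, false) : α ⊕ (Finset α × ℕ × Bool)) ∈
        ({d, Sum.inl c, y} : Finset (α ⊕ (Finset α × ℕ × Bool))) := by
      rw [hset]; simp
    simp only [Finset.mem_insert, Finset.mem_singleton] at h2
    rcases h2 with h2 | h2 | h2
    · exact h2.symm
    · simp at h2
    · rw [h1] at h2; simp at h2
  · refine ⟨C, i, false, hi, h1, ?_⟩
    have h2 : (Sum.inr (C, i, true) : α ⊕ (Finset α × ℕ × Bool)) ∈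
        ({d, Sum.inl c, y} : Finset (α ⊕ (Finset α × ℕ × Bool))) := by
      rw [hset]; simp
    simp only [Finset.mem_insert, Finset.mem_singleton] at h2
    rcases h2 with h2 | h2 | h2
    · exact h2.symm
    · simp at h2
    · rw [h1] at h2; simp at h2

private lemma rstar_core {D : Finset (α ⊕ (Finset α × ℕ × Bool))}
    {x y : α ⊕ (Finset α × ℕ × Bool)} (h2 : 2 ≤ D.card) (hxy : x ≠ y)
    (hD : ∀ c ∈ D, Rstar A c x y) :
    ∃ px py : Finset α × ℕ × Bool, x = Sum.inr px ∧ y = Sum.inr py := by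
  have hlt : 1 < D.card := by omega
  obtain ⟨d₁, hd₁, d₂, hd₂, hdd⟩ := Finset.one_lt_card.mp hlt
  match x, y with
  | Sum.inl cx, y =>
    obtain ⟨C, i, b, _, hy1, hdeq1⟩ := rstar_det (hD d₁ hd₁) (Ne.symm hxy)
    obtain ⟨C', i', b', _, hy2, hdeq2⟩ := rstar_det (hD d₂ hd₂) (Ne.symm hxy)
    rw [hy1] at hy2
    simp only [Sum.inr.injEq, Prod.mk.injEq] at hy2
    obtain ⟨rfl, rfl, rfl⟩ := hy2
    exact absurd (hdeq1.trans hdeq2.symm) hdd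
  | Sum.inr px, Sum.inl cy =>
    obtain ⟨C, i, b, _, hy1, hdeq1⟩ := rstar_det (rstar_swap (hD d₁ hd₁)) hxy
    obtain ⟨C', i', b', _, hy2, hdeq2⟩ := rstar_det (rstar_swap (hD d₂ hd₂)) hxy
    rw [hy1] at hy2
    simp only [Sum.inr.injEq, Prod.mk.injEq] at hy2
    obtain ⟨rfl, rfl, rfl⟩ := hy2
    exact absurd (hdeq1.trans hdeq2.symm) hdd
  | Sum.inr px, Sum.inr py => exact ⟨px, py, rfl, rfl⟩

private lemma rstar_noInr {q px py : Finset α × ℕ × Bool} :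
    ¬ Rstar A (Sum.inr q) (Sum.inr px) (Sum.inr py) := by
  rintro ⟨C, i, hi, c, hc, hset⟩
  have : (Sum.inl c : α ⊕ (Finset α × ℕ × Bool)) ∈
      ({Sum.inr q, Sum.inr px, Sum.inr py} : Finset (α ⊕ (Finset α × ℕ × Bool))) := by
    rw [hset]; simp
  simp at this

private lemma inl_star {c : α} (h : Sum.inl c ∈ starCarrier A) : c ∈ A.carrier := by
  rcases h with ⟨b, hb, he⟩ | ⟨C, i, b, he, _⟩
  · rwa [show b = c from Sum.inl_injective he] at hb
  · exact absurd he (by simp)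

private lemma mcp_eq (A : SStruct α) (hfin : A.carrier.Finite)
    (X : Finset (α ⊕ (Finset α × ℕ × Bool))) (hX : ↑X ⊆ starCarrier A) :
    MCPin (Rstar A) (hfin.toFinset.image Sum.inl) =
      MCPin (Rstar A) (X ∪ hfin.toFinset.image Sum.inl) := by
  set Z : Finset (α ⊕ (Finset α × ℕ × Bool)) := hfin.toFinset.image Sum.inl with hZ
  have hZmem : ∀ c : α, c ∈ A.carrier → (Sum.inl c : α ⊕ (Finset α × ℕ × Bool)) ∈ Z := by
    intro c hc
    exact Finset.mem_image.mpr ⟨c, hfin.mem_toFinset.mpr hc, rfl⟩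
  ext ⟨D, w⟩
  simp only [MCPin, Set.mem_setOf_eq]
  constructor
  · rintro ⟨h3, hsub, x, y, hxy, hw, hx, hy, hall, hmax⟩
    refine ⟨h3, hsub.trans Finset.subset_union_right, x, y, hxy, hw, hx, hy, hall, ?_⟩
    intro a ha hnD hax hay
    rcases Finset.mem_union.mp ha with haX | haZ
    · match a with
      | Sum.inl c =>
        exact hmax _ (hZmem c (inl_star (hX haX))) hnD hax hay
      | Sum.inr qq =>
        obtain ⟨px, py, hxe, hye⟩ := rstar_core (by omega) hxy hall
        rw [hxe, hye]
        exact rstar_noInr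
    · exact hmax a haZ hnD hax hay
  · rintro ⟨h3, hsub, x, y, hxy, hw, hx, hy, hall, hmax⟩
    obtain ⟨px, py, hxe, hye⟩ := rstar_core (by omega) hxy hall
    have hsubZ : D ⊆ Z := by
      intro c hc
      have hT := hall c hc
      match c with
      | Sum.inl b =>
        rcases Finset.mem_union.mp (hsub hc) with hcX | hcZ
        · exact hZmem b (inl_star (hX hcX))
        · exact hcZ
      | Sum.inr qq =>
        rw [hxe, hye] at hT
        exact absurd hT rstar_noInr
    exact ⟨h3, hsubZ, x, y, hxy, hw, hx, hy, hall,
      fun a ha => hmax a (Finset.mem_union_right _ ha)⟩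

private def gT : α ⊕ (Finset α × ℕ × Bool) → Option (Finset α × ℕ)
  | Sum.inr (C, i, true) => some (C, i)
  | _ => none

private def isF : α ⊕ (Finset α × ℕ × Bool) → Bool
  | Sum.inr (_, _, false) => true
  | _ => false

private lemma gT_eq {z : α ⊕ (Finset α × ℕ × Bool)} {q : Finset α × ℕ} :
    gT z = some q ↔ z = Sum.inr (q.1, q.2, true) := by
  obtain ⟨qC, qi⟩ := q
  match z with
  | Sum.inl a => simp [gT]
  | Sum.inr (C, i, true) => simp [gT]
  | Sum.inr (C, i, false) => simp [gT]

private def tripP : α × Finset α × ℕ → Finset (α ⊕ (Finset α × ℕ × Bool)) :=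
  fun p => {Sum.inl p.1, Sum.inr (p.2.1, p.2.2, true), Sum.inr (p.2.1, p.2.2, false)}

private lemma tripP_inj : Function.Injective (tripP (α := α)) := by
  rintro ⟨c, C, i⟩ ⟨c', C', i'⟩ h
  have h1 : (Sum.inl c : α ⊕ (Finset α × ℕ × Bool)) ∈ tripP (c', C', i') := by
    rw [← h]; simp [tripP]
  have h2 : (Sum.inr (C, i, true) : α ⊕ (Finset α × ℕ × Bool)) ∈ tripP (c', C', i') := by
    rw [← h]; simp [tripP]
  simp only [tripP, Finset.mem_insert, Finset.mem_singleton] at h1 h2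
  simp_all

private lemma part1 (A : SStruct α) (hCs : ∀ X : Finset α, ↑X ⊆ A.carrier → 0 ≤ d0s A X)
    (X : Finset (α ⊕ (Finset α × ℕ × Bool))) (hX : ↑X ⊆ starCarrier A) :
    0 ≤ d0 (Rstar A) X := by
  classical
  set X0 : Finset α := X.preimage Sum.inl Sum.inl_injective.injOn with hX0def
  have hX0mem : ∀ c : α, c ∈ X0 ↔ Sum.inl c ∈ X := fun c => Finset.mem_preimage
  set Pall : Finset (Finset α × ℕ) := X.filterMap gT
    (by
      intro a a' q h h'
      rw [Option.mem_def, gT_eq] at h h'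
      rw [h, h']) with hPalldef
  set Pg : Finset (Finset α × ℕ) :=
    Pall.filter (fun q => q.2 < A.pm q.1 ∧ Sum.inr (q.1, q.2, false) ∈ X) with hPgdef
  have hPg : ∀ q : Finset α × ℕ, q ∈ Pg ↔
      (Sum.inr (q.1, q.2, true) ∈ X ∧ q.2 < A.pm q.1 ∧ Sum.inr (q.1, q.2, false) ∈ X) := by
    intro q
    rw [hPgdef, Finset.mem_filter, hPalldef, Finset.mem_filterMap]
    constructor
    · rintro ⟨⟨a, haX, haq⟩, hcond⟩
      rw [gT_eq] at haq
      exact ⟨haq ▸ haX, hcond⟩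
    · rintro ⟨h1, hcond⟩
      exact ⟨⟨_, h1, gT_eq.mpr rfl⟩, hcond⟩
  set Qf : Finset (α × Finset α × ℕ) :=
    (X0 ×ˢ Pg).filter (fun p => p.1 ∈ p.2.1) with hQfdef
  have hQf : ∀ p : α × Finset α × ℕ,
      p ∈ Qf ↔ (p.1 ∈ X0 ∧ p.2 ∈ Pg ∧ p.1 ∈ p.2.1) := by
    intro p
    rw [hQfdef, Finset.mem_filter, Finset.mem_product]
    tauto
  -- the set of R-triangles in X is the image of Qf
  have hS : {s : Finset (α ⊕ (Finset α × ℕ × Bool)) | s ⊆ X ∧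
      ∃ x y z, x ≠ y ∧ x ≠ z ∧ y ≠ z ∧ s = {x, y, z} ∧ Rstar A x y z} =
      ↑(Qf.image tripP) := by
    ext s
    simp only [Set.mem_setOf_eq, Finset.coe_image, Set.mem_image, Finset.mem_coe]
    constructor
    · rintro ⟨hsX, x, y, z, hxy, hxz, hyz, rfl, C, i, hi, c, hc, hset⟩
      refine ⟨(c, C, i), ?_, hset.symm⟩
      rw [hQf]
      have hmem : ∀ u, u ∈ ({Sum.inl c, Sum.inr (C, i, true), Sum.inr (C, i, false)} :
          Finset (α ⊕ (Finset α × ℕ × Bool))) → u ∈ X := by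
        intro u hu; rw [← hset] at hu; exact hsX hu
      exact ⟨(hX0mem c).mpr (hmem _ (by simp)),
        (hPg _).mpr ⟨hmem _ (by simp), hi, hmem _ (by simp)⟩, hc⟩
    · rintro ⟨⟨c, C, i⟩, hp, rfl⟩
      rw [hQf] at hp
      obtain ⟨h1, h2, h3⟩ := hp
      rw [hPg] at h2
      refine ⟨?_, Sum.inl c, Sum.inr (C, i, true), Sum.inr (C, i, false),
        by simp, by simp, by simp, rfl, ⟨C, i, h2.2.1, c, h3, rfl⟩⟩
      intro u hu
      simp only [tripP, Finset.mem_insert, Finset.mem_singleton] at hu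
      rcases hu with rfl | rfl | rfl
      · exact (hX0mem c).mp h1
      · exact h2.1
      · exact h2.2.2
  have hr : (rCount (Rstar A) X : ℤ) = (Qf.card : ℤ) := by
    rw [rCount, hS, Set.ncard_coe_finset, Finset.card_image_of_injective _ tripP_inj]
  -- fiberwise count
  have hQcard : Qf.card = ∑ q ∈ Pg, (X0.filter (· ∈ q.1)).card := by
    rw [Finset.card_eq_sum_card_fiberwise
      (f := Prod.snd) (t := Pg) (fun p hp => ((hQf p).mp hp).2.1)]
    refine Finset.sum_congr rfl fun q hq => ?_
    refine Finset.card_nbij Prod.fst ?_ ?_ ?_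
    · intro p hp
      simp only [Finset.mem_coe, Finset.mem_filter] at hp ⊢
      obtain ⟨hp1, hp2⟩ := hp
      rw [hQf] at hp1
      exact ⟨hp1.1, hp2 ▸ hp1.2.2⟩
    · intro p hp p' hp' hpp
      simp only [Finset.coe_filter, Set.mem_setOf_eq] at hp hp'
      exact Prod.ext hpp (hp.2.trans hp'.2.symm)
    · intro c hc
      simp only [Finset.coe_filter, Set.mem_setOf_eq, Finset.mem_coe, Set.mem_image] at hc ⊢
      exact ⟨(c, q), ⟨(hQf _).mpr ⟨hc.1, hq, hc.2⟩, rfl⟩, rfl⟩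
  -- termwise bound
  have h1 : ∀ q ∈ Pg, ((X0.filter (· ∈ q.1)).card : ℤ) ≤ cardStar (q.1 ∩ X0) + 2 := by
    intro q _
    have he : X0.filter (· ∈ q.1) = q.1 ∩ X0 := by
      rw [Finset.filter_mem_eq_inter, Finset.inter_comm]
    rw [he]
    have := le_max_right (0 : ℤ) (((q.1 ∩ X0).card : ℤ) - 2)
    rw [cardStar]
    omega
  -- grouped bound against the finsum
  have hms := A.finite_meets X0
  set sF : Finset (Finset α) := Pg.image Prod.fst ∪ hms.toFinset with hsFdef
  have hfin_eq : ∑ᶠ C : Finset α, (A.pm C : ℤ) * cardStar (C ∩ X0) =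
      ∑ C ∈ sF, (A.pm C : ℤ) * cardStar (C ∩ X0) := by
    apply finsum_eq_sum_of_support_subset
    intro C hC
    simp only [Function.mem_support] at hC
    have hpm : A.pm C ≠ 0 := by
      intro h; rw [h] at hC; simp at hC
    have hcs : cardStar (C ∩ X0) ≠ 0 := fun h => hC (by rw [h, mul_zero])
    have h3 : 3 ≤ (C ∩ X0).card := by
      by_contra hlt
      apply hcs
      rw [cardStar]
      have : ((C ∩ X0).card : ℤ) ≤ 2 := by exact_mod_cast by omega
      omega
    exact Finset.mem_coe.mpr (Finset.mem_union_right _ (hms.mem_toFinset.mpr ⟨hpm, h3⟩))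
  have h2 : (∑ q ∈ Pg, cardStar (q.1 ∩ X0)) ≤
      ∑ᶠ C : Finset α, (A.pm C : ℤ) * cardStar (C ∩ X0) := by
    rw [hfin_eq]
    calc ∑ q ∈ Pg, cardStar (q.1 ∩ X0)
        = ∑ C ∈ Pg.image Prod.fst,
            (Pg.filter fun q => q.1 = C).card • cardStar (C ∩ X0) :=
          Finset.sum_comp (fun C => cardStar (C ∩ X0)) Prod.fst
      _ ≤ ∑ C ∈ Pg.image Prod.fst, (A.pm C : ℤ) * cardStar (C ∩ X0) := by
          apply Finset.sum_le_sum
          intro C hC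
          rw [nsmul_eq_mul]
          apply mul_le_mul_of_nonneg_right _ (le_max_left _ _)
          have hcard : (Pg.filter fun q => q.1 = C).card ≤ (Finset.range (A.pm C)).card := by
            apply Finset.card_le_card_of_injOn Prod.snd
            · intro q hq
              simp only [Finset.mem_coe, Finset.mem_filter] at hq ⊢
              rw [Finset.mem_range, ← hq.2]
              exact ((hPg q).mp hq.1).2.1
            · intro q hq q' hq' hqq
              simp only [Finset.coe_filter, Set.mem_setOf_eq] at hq hq'
              exact Prod.ext (hq.2.trans hq'.2.symm) hqq
          rw [Finset.card_range] at hcard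
          exact_mod_cast hcard
      _ ≤ ∑ C ∈ sF, (A.pm C : ℤ) * cardStar (C ∩ X0) := by
          apply Finset.sum_le_sum_of_subset_of_nonneg Finset.subset_union_left
          intro C _ _
          exact mul_nonneg (by positivity) (le_max_left _ _)
  -- strength of X0
  have hX0sub : ↑X0 ⊆ A.carrier := by
    intro a ha
    exact inl_star (hX ((hX0mem a).mp ha))
  have h3 := hCs X0 hX0sub
  rw [d0s] at h3
  -- cardinality bookkeeping
  have hcards : X0.card + Pg.card + Pg.card ≤ X.card := by
    set Xl : Finset (α ⊕ (Finset α × ℕ × Bool)) := X.filter (fun z => z.isLeft) with hXl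
    set Xt : Finset (α ⊕ (Finset α × ℕ × Bool)) := X.filter (fun z => (gT z).isSome) with hXt
    set Xf : Finset (α ⊕ (Finset α × ℕ × Bool)) := X.filter (fun z => isF z) with hXf
    have hl : X0.card ≤ Xl.card := by
      apply Finset.card_le_card_of_injOn Sum.inl
      · intro a ha
        rw [hXl, Finset.mem_coe, Finset.mem_filter]
        exact ⟨(hX0mem a).mp ha, rfl⟩
      · exact Sum.inl_injective.injOn
    have ht : Pg.card ≤ Xt.card := by
      apply Finset.card_le_card_of_injOn (fun q => Sum.inr (q.1, q.2, true))
      · intro q hq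
        rw [hXt, Finset.mem_coe, Finset.mem_filter]
        refine ⟨((hPg q).mp hq).1, ?_⟩
        simp [gT]
      · intro q _ q' _ h
        simp only [Sum.inr.injEq, Prod.mk.injEq] at h
        exact Prod.ext h.1 h.2.1
    have hf : Pg.card ≤ Xf.card := by
      apply Finset.card_le_card_of_injOn (fun q => Sum.inr (q.1, q.2, false))
      · intro q hq
        rw [hXf, Finset.mem_coe, Finset.mem_filter]
        exact ⟨((hPg q).mp hq).2.2, by simp [isF]⟩
      · intro q _ q' _ h
        simp only [Sum.inr.injEq, Prod.mk.injEq] at h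
        exact Prod.ext h.1 h.2.1
    have hd1 : Disjoint Xl Xt := by
      rw [Finset.disjoint_left]
      intro a ha hb
      rw [hXl, Finset.mem_filter] at ha
      rw [hXt, Finset.mem_filter] at hb
      match a, ha, hb with
      | Sum.inl c, ha, hb => exact absurd hb.2 (by simp [gT])
    have hd2 : Disjoint (Xl ∪ Xt) Xf := by
      rw [Finset.disjoint_left]
      intro a ha hb
      rw [hXf, Finset.mem_filter] at hb
      rcases Finset.mem_union.mp ha with h | h
      · rw [hXl, Finset.mem_filter] at h
        match a, h, hb with
        | Sum.inl c, h, hb => exact absurd hb.2 (by simp [isF])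
      · rw [hXt, Finset.mem_filter] at h
        match a, h, hb with
        | Sum.inl c, h, hb => exact absurd h.2 (by simp [gT])
        | Sum.inr (C, i, true), h, hb => exact absurd hb.2 (by simp [isF])
        | Sum.inr (C, i, false), h, hb => exact absurd h.2 (by simp [gT])
    have hsub : Xl ∪ Xt ∪ Xf ⊆ X := by
      intro a ha
      rcases Finset.mem_union.mp ha with h | h
      · rcases Finset.mem_union.mp h with h' | h'
        · exact Finset.mem_of_mem_filter _ h'
        · exact Finset.mem_of_mem_filter _ h'
      · exact Finset.mem_of_mem_filter _ h
    calc X0.card + Pg.card + Pg.card ≤ Xl.card + Xt.card + Xf.card := by omega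
      _ = (Xl ∪ Xt ∪ Xf).card := by
          rw [Finset.card_union_of_disjoint hd2, Finset.card_union_of_disjoint hd1]
      _ ≤ X.card := Finset.card_le_card hsub
  -- put it together
  have hchain : (Qf.card : ℤ) ≤ (X.card : ℤ) := by
    have e1 : (Qf.card : ℤ) = ∑ q ∈ Pg, ((X0.filter (· ∈ q.1)).card : ℤ) := by
      rw [hQcard]; push_cast; rfl
    have e2 : ∑ q ∈ Pg, ((X0.filter (· ∈ q.1)).card : ℤ) ≤
        ∑ q ∈ Pg, (cardStar (q.1 ∩ X0) + 2) := Finset.sum_le_sum h1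
    have e3 : ∑ q ∈ Pg, (cardStar (q.1 ∩ X0) + 2) =
        (∑ q ∈ Pg, cardStar (q.1 ∩ X0)) + 2 * Pg.card := by
      rw [Finset.sum_add_distrib, Finset.sum_const]
      rw [nsmul_eq_mul]
      ring
    have e4 : (X0.card : ℤ) + 2 * Pg.card ≤ (X.card : ℤ) := by exact_mod_cast by omega
    linarith
  rw [d0, hr]
  linarith

end Aux

/-- for a finite S-structure `A` with `∅ ≤ₛ A`, the generic
R-representation `A*` satisfies `∅ ≤ A*` (every subset of `A*` has nonnegative
R-predimension) and `A ≤ₛ A*` (the image of `A` is strong in the S-reduct of `A*`). -/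
theorem stmt12 (A : SStruct α) (hfin : A.carrier.Finite)
    (hCs : ∀ X : Finset α, ↑X ⊆ A.carrier → 0 ≤ d0s A X) :
    (∀ X : Finset (α ⊕ (Finset α × ℕ × Bool)), ↑X ⊆ starCarrier A →
      0 ≤ d0 (Rstar A) X) ∧
    (∀ X : Finset (α ⊕ (Finset α × ℕ × Bool)), ↑X ⊆ starCarrier A →
      d0sOf (Rstar A) (hfin.toFinset.image Sum.inl) ≤
        d0sOf (Rstar A) (X ∪ hfin.toFinset.image Sum.inl)) := by
  
  constructor
  · intro X hX
    exact part1 A hCs X hX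
  · intro X hX
    have hM := mcp_eq A hfin X hX
    have hc : (((hfin.toFinset.image Sum.inl :
          Finset (α ⊕ (Finset α × ℕ × Bool)))).card : ℤ) ≤
        ((X ∪ hfin.toFinset.image Sum.inl).card : ℤ) := by
      exact_mod_cast Finset.card_le_card Finset.subset_union_right
    simp only [d0sOf, pmRof]
    rw [hM]
    linarith
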